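/- Let V̂(x,y) = (x² − 3xy)² + (x² − 4xy − 2y²)². Suppose (x, y) : I → ℝ² is twice continuously differentiable on an open interval I and satisfies the closed-loop equations ẍ = −(∂V̂/∂x + ∂V̂/∂y) and ÿ = −(ẏ − ẋ) − (∂V̂/∂x + 2 ∂V̂/∂y), the partial derivatives being evaluated at (x(t), y(t)). Then for all t ∈ I, d/dt [ ẋ² − ẋ ẏ + ½ ẏ² + V̂(x,y) ] = −(ẏ − ẋ)². -/

import Mathlib

/-!
Statement 18: the Lyapunov dissipation identity
`d/dt [ ẋ² − ẋẏ + ½ẏ² + V̂(x,y) ] = −(ẏ − ẋ)²` along solutions of the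
closed-loop dynamics of the abstract example.
-/

open Set

theorem statement18 (V : ℝ × ℝ → ℝ)
    (hV : ∀ p : ℝ × ℝ, V p =
      (p.1 ^ 2 - 3 * p.1 * p.2) ^ 2 + (p.1 ^ 2 - 4 * p.1 * p.2 - 2 * p.2 ^ 2) ^ 2)
    (a c : ℝ) (x y : ℝ → ℝ)
    (hx : ContDiffOn ℝ 2 x (Ioo a c)) (hy : ContDiffOn ℝ 2 y (Ioo a c))
    (heq1 : ∀ t ∈ Ioo a c,
      deriv (deriv x) t =
        -(fderiv ℝ V (x t, y t) (1, 0) + fderiv ℝ V (x t, y t) (0, 1)))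
    (heq2 : ∀ t ∈ Ioo a c,
      deriv (deriv y) t = -(deriv y t - deriv x t)
        - (fderiv ℝ V (x t, y t) (1, 0) + 2 * fderiv ℝ V (x t, y t) (0, 1))) :
    ∀ t ∈ Ioo a c,
      deriv (fun s => (deriv x s) ^ 2 - deriv x s * deriv y s
        + (1 / 2) * (deriv y s) ^ 2 + V (x s, y s)) t
      = -(deriv y t - deriv x t) ^ 2 := by
  have hVfun : V = fun p : ℝ × ℝ =>
      (p.1 ^ 2 - 3 * p.1 * p.2) ^ 2 + (p.1 ^ 2 - 4 * p.1 * p.2 - 2 * p.2 ^ 2) ^ 2 :=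
    funext hV
  have hVdiff : Differentiable ℝ V := by
    rw [hVfun]; fun_prop
  intro t ht
  have hop : IsOpen (Ioo a c) := isOpen_Ioo
  have hmem := hop.mem_nhds ht
  have hx1 : ContDiffOn ℝ 1 (deriv x) (Ioo a c) :=
    hx.deriv_of_isOpen hop (by norm_num)
  have hy1 : ContDiffOn ℝ 1 (deriv y) (Ioo a c) :=
    hy.deriv_of_isOpen hop (by norm_num)
  have hdx : DifferentiableAt ℝ (deriv x) t :=
    ((hx1.differentiableOn one_ne_zero) t ht).differentiableAt hmem
  have hdy : DifferentiableAt ℝ (deriv y) t :=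
    ((hy1.differentiableOn one_ne_zero) t ht).differentiableAt hmem
  have hxd : DifferentiableAt ℝ x t :=
    ((hx.differentiableOn (by norm_num)) t ht).differentiableAt hmem
  have hyd : DifferentiableAt ℝ y t :=
    ((hy.differentiableOn (by norm_num)) t ht).differentiableAt hmem
  -- notation
  set x' := deriv x t
  set y' := deriv y t
  set Vx := fderiv ℝ V (x t, y t) (1, 0)
  set Vy := fderiv ℝ V (x t, y t) (0, 1)
  have hxx : HasDerivAt (deriv x) (deriv (deriv x) t) t := hdx.hasDerivAt
  have hyy : HasDerivAt (deriv y) (deriv (deriv y) t) t := hdy.hasDerivAt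
  have hxt : HasDerivAt x x' t := hxd.hasDerivAt
  have hyt : HasDerivAt y y' t := hyd.hasDerivAt
  have hpair : HasDerivAt (fun s => (x s, y s)) (x', y') t := hxt.prodMk hyt
  have hVc : HasDerivAt (fun s => V (x s, y s)) (fderiv ℝ V (x t, y t) (x', y')) t :=
    (hVdiff.differentiableAt.hasFDerivAt).comp_hasDerivAt t hpair
  have hlin : fderiv ℝ V (x t, y t) (x', y') = x' * Vx + y' * Vy := by
    have : (x', y') = x' • ((1 : ℝ), (0 : ℝ)) + y' • ((0 : ℝ), (1 : ℝ)) := by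
      simp [Prod.ext_iff]
    rw [this, map_add, map_smul, map_smul, smul_eq_mul, smul_eq_mul]
  rw [hlin] at hVc
  have hmain : HasDerivAt (fun s => (deriv x s) ^ 2 - deriv x s * deriv y s
      + (1 / 2) * (deriv y s) ^ 2 + V (x s, y s))
      (2 * x' * deriv (deriv x) t
        - (deriv (deriv x) t * y' + x' * deriv (deriv y) t)
        + (1 / 2) * (2 * y' * deriv (deriv y) t)
        + (x' * Vx + y' * Vy)) t := by
    have h1 : HasDerivAt (fun s => (deriv x s) ^ 2) (2 * x' * deriv (deriv x) t) t := by
      have e : (fun s => (deriv x s) ^ 2) = fun s => deriv x s * deriv x s := by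
        ext s; ring
      rw [e, show 2 * x' * deriv (deriv x) t
          = deriv (deriv x) t * deriv x t + deriv x t * deriv (deriv x) t by simp [x']; ring]
      exact hxx.mul hxx
    have h2 : HasDerivAt (fun s => deriv x s * deriv y s)
        (deriv (deriv x) t * y' + x' * deriv (deriv y) t) t := hxx.mul hyy
    have h3 : HasDerivAt (fun s => (1 / 2 : ℝ) * (deriv y s) ^ 2)
        ((1 / 2) * (2 * y' * deriv (deriv y) t)) t := by
      have : HasDerivAt (fun s => (deriv y s) ^ 2) (2 * y' * deriv (deriv y) t) t := by
        have e : (fun s => (deriv y s) ^ 2) = fun s => deriv y s * deriv y s := by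
          ext s; ring
        rw [e, show 2 * y' * deriv (deriv y) t
            = deriv (deriv y) t * deriv y t + deriv y t * deriv (deriv y) t by simp [y']; ring]
        exact hyy.mul hyy
      simpa using this.const_mul (1 / 2 : ℝ)
    exact ((h1.sub h2).add h3).add hVc
  rw [hmain.deriv, heq1 t ht, heq2 t ht]
  ring
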